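/- For any sequence r = (r_ℓ)_{ℓ∈ℤ} in [0,1], the sets F_n^r = { σ^a ∘ f_𝐛 : a ∈ [−2^n, 2^n], 𝐛 ∈ B_n } form a left Følner sequence in the Lamplighter group G = ⟨f, σ⟩, i.e., |g F_n^r Δ F_n^r| / |F_n^r| → 0 for every g ∈ G. -/

import Mathlib

open Filter Topology

noncomputable section

/-- The shift `s ↦ s - 1` on the one-point compactification `ℤ ∪ {∞}`, fixing `∞`. -/
def shiftOP : Equiv.Perm (OnePoint ℤ) :=
  (Equiv.optionCongr (Equiv.subRight (1 : ℤ)) : Equiv.Perm (Option ℤ))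

/-- The phase space `X = (ℤ ∪ {∞}) × {0,1}`. -/
abbrev LampX : Type := OnePoint ℤ × Bool

/-- The transposition `f` swapping `(0,1)` and `(0,0)`. -/
def lampF : Equiv.Perm LampX :=
  haveI : DecidableEq LampX := Classical.decEq _
  Equiv.swap (((0 : ℤ) : OnePoint ℤ), true) (((0 : ℤ) : OnePoint ℤ), false)

/-- The shift `σ` on `X`, decrementing the integer coordinate. -/
def lampSigma : Equiv.Perm LampX := (shiftOP).prodCongr (Equiv.refl Bool)

/-- `f_n = σ^{-n} ∘ f ∘ σ^n`. -/
def lampfn (n : ℤ) : Equiv.Perm LampX := lampSigma ^ (-n) * lampF * lampSigma ^ n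

/-- The Lamplighter group `G = ⟨f, σ⟩`. -/
def lampG : Subgroup (Equiv.Perm LampX) := Subgroup.closure {lampF, lampSigma}

/-- For `l = [b_1, …, b_k]`, the composition `f_{b_k} ∘ ⋯ ∘ f_{b_1}`. -/
def lampProd (l : List ℤ) : Equiv.Perm LampX := (l.reverse.map lampfn).prod

open scoped symmDiff

/-- `f_𝐛` for a finite set `𝐛 ⊆ ℤ`: the composition `f_{b_m} ∘ ⋯ ∘ f_{b_1}` where
`b_1 < ⋯ < b_m` enumerates `𝐛` increasingly. -/
def lampfB (b : Finset ℤ) : Equiv.Perm LampX := lampProd (b.sort (· ≤ ·))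

section LampAux
open OnePoint
-- pointwise lemmas
lemma shiftOP_coe (x : ℤ) : shiftOP (x : OnePoint ℤ) = ((x - 1 : ℤ) : OnePoint ℤ) := rfl

lemma shiftOP_inv_coe (x : ℤ) : shiftOP⁻¹ (x : OnePoint ℤ) = ((x + 1 : ℤ) : OnePoint ℤ) := by
  apply shiftOP.injective
  rw [show shiftOP (shiftOP⁻¹ (x : OnePoint ℤ)) = x from shiftOP.apply_symm_apply _, shiftOP_coe]
  norm_num

lemma shiftOP_zpow_coe (a : ℤ) : ∀ x : ℤ, (shiftOP ^ a) (x : OnePoint ℤ) = ((x - a : ℤ) : OnePoint ℤ) := by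
  induction a using Int.induction_on with
  | zero => intro x; simp
  | succ i ih =>
    intro x
    have h : (shiftOP ^ ((i : ℤ) + 1)) (x : OnePoint ℤ)
        = (shiftOP ^ (i : ℤ)) (shiftOP (x : OnePoint ℤ)) := by
      rw [zpow_add_one]
      exact Equiv.Perm.mul_apply _ _ _
    rw [h, shiftOP_coe, ih]
    congr 1; ring
  | pred i ih =>
    intro x
    have h : (shiftOP ^ (-(i : ℤ) - 1)) (x : OnePoint ℤ)
        = (shiftOP ^ (-(i : ℤ))) (shiftOP⁻¹ (x : OnePoint ℤ)) := by
      rw [zpow_sub_one]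
      exact Equiv.Perm.mul_apply _ _ _
    rw [h, shiftOP_inv_coe, ih]
    congr 1; ring

lemma shiftOP_zpow_infty (a : ℤ) : (shiftOP ^ a) (∞ : OnePoint ℤ) = ∞ :=
  Function.IsFixedPt.perm_zpow (by rfl) a

lemma lampSigma_apply (p : LampX) : lampSigma p = (shiftOP p.1, p.2) := rfl

lemma lampSigma_inv_apply (p : LampX) : lampSigma⁻¹ p = (shiftOP⁻¹ p.1, p.2) := rfl

lemma lampSigma_zpow_apply (a : ℤ) : ∀ p : LampX, (lampSigma ^ a) p = ((shiftOP ^ a) p.1, p.2) := by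
  induction a using Int.induction_on with
  | zero => intro p; simp
  | succ i ih =>
    intro p
    have h : (lampSigma ^ ((i : ℤ) + 1)) p = (lampSigma ^ (i : ℤ)) (lampSigma p) := by
      rw [zpow_add_one]; exact Equiv.Perm.mul_apply _ _ _
    have h2 : (shiftOP ^ ((i : ℤ) + 1)) p.1 = (shiftOP ^ (i : ℤ)) (shiftOP p.1) := by
      rw [zpow_add_one]; exact Equiv.Perm.mul_apply _ _ _
    rw [h, ih, lampSigma_apply, h2]
  | pred i ih =>
    intro p
    have h : (lampSigma ^ (-(i : ℤ) - 1)) p = (lampSigma ^ (-(i : ℤ))) (lampSigma⁻¹ p) := by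
      rw [zpow_sub_one]; exact Equiv.Perm.mul_apply _ _ _
    have h2 : (shiftOP ^ (-(i : ℤ) - 1)) p.1 = (shiftOP ^ (-(i : ℤ))) (shiftOP⁻¹ p.1) := by
      rw [zpow_sub_one]; exact Equiv.Perm.mul_apply _ _ _
    rw [h, ih, lampSigma_inv_apply, h2]

lemma lampSigma_zpow_coe (a x : ℤ) (t : Bool) :
    (lampSigma ^ a) ((x : OnePoint ℤ), t) = (((x - a : ℤ) : OnePoint ℤ), t) := by
  rw [lampSigma_zpow_apply]; simp [shiftOP_zpow_coe]

lemma lampSigma_zpow_infty (a : ℤ) (t : Bool) :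
    (lampSigma ^ a) ((∞ : OnePoint ℤ), t) = (∞, t) := by
  rw [lampSigma_zpow_apply]; simp [shiftOP_zpow_infty]

lemma lampF_apply_coe (x : ℤ) (t : Bool) :
    lampF ((x : OnePoint ℤ), t) = ((x : OnePoint ℤ), if x = 0 then !t else t) := by
  letI : DecidableEq LampX := Classical.decEq _
  by_cases h : x = 0
  · subst h; cases t <;> simp [lampF]
  · rw [if_neg h]
    exact Equiv.swap_apply_of_ne_of_ne
      (by simp [Prod.ext_iff, OnePoint.coe_eq_coe, h])
      (by simp [Prod.ext_iff, OnePoint.coe_eq_coe, h])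

lemma lampF_apply_infty (t : Bool) : lampF ((∞ : OnePoint ℤ), t) = (∞, t) :=
  letI : DecidableEq LampX := Classical.decEq _
  Equiv.swap_apply_of_ne_of_ne
    (by simp [Prod.ext_iff, OnePoint.infty_ne_coe])
    (by simp [Prod.ext_iff, OnePoint.infty_ne_coe])

lemma lampfn_apply_coe (n x : ℤ) (t : Bool) :
    lampfn n ((x : OnePoint ℤ), t) = ((x : OnePoint ℤ), if x = n then !t else t) := by
  have h : lampfn n ((x : OnePoint ℤ), t)
      = (lampSigma ^ (-n)) (lampF ((lampSigma ^ n) ((x : OnePoint ℤ), t))) := rfl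
  rw [h, lampSigma_zpow_coe, lampF_apply_coe, lampSigma_zpow_coe]
  have hx : x - n - -n = x := by ring
  rw [hx]
  simp [sub_eq_zero]

lemma lampfn_apply_infty (n : ℤ) (t : Bool) :
    lampfn n ((∞ : OnePoint ℤ), t) = (∞, t) := by
  have h : lampfn n ((∞ : OnePoint ℤ), t)
      = (lampSigma ^ (-n)) (lampF ((lampSigma ^ n) ((∞ : OnePoint ℤ), t))) := rfl
  rw [h, lampSigma_zpow_infty, lampF_apply_infty, lampSigma_zpow_infty]
lemma lampProd_nil : lampProd [] = 1 := rfl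

lemma lampProd_cons (a : ℤ) (l : List ℤ) : lampProd (a :: l) = lampProd l * lampfn a := by
  simp [lampProd, List.prod_append]

lemma lampProd_apply_coe : ∀ l : List ℤ, l.Nodup →
    ∀ (x : ℤ) (t : Bool), lampProd l ((x : OnePoint ℤ), t)
      = ((x : OnePoint ℤ), xor (decide (x ∈ l)) t) := by
  intro l
  induction l with
  | nil => intro _ x t; simp [lampProd_nil]
  | cons a l ih =>
    intro hnd x t
    have hal : a ∉ l := (List.nodup_cons.mp hnd).1
    have h : lampProd (a :: l) ((x : OnePoint ℤ), t)
        = lampProd l (lampfn a ((x : OnePoint ℤ), t)) := by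
      rw [lampProd_cons]; exact Equiv.Perm.mul_apply _ _ _
    rw [h, lampfn_apply_coe, ih (List.nodup_cons.mp hnd).2]
    by_cases hxa : x = a
    · subst hxa
      have : x ∉ l := hal
      simp [this]
    · simp [hxa]

lemma lampProd_apply_infty : ∀ l : List ℤ, ∀ t : Bool,
    lampProd l ((∞ : OnePoint ℤ), t) = (∞, t) := by
  intro l
  induction l with
  | nil => intro t; simp [lampProd_nil]
  | cons a l ih =>
    intro t
    have h : lampProd (a :: l) ((∞ : OnePoint ℤ), t)
        = lampProd l (lampfn a ((∞ : OnePoint ℤ), t)) := by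
      rw [lampProd_cons]; exact Equiv.Perm.mul_apply _ _ _
    rw [h, lampfn_apply_infty, ih]

lemma lampfB_apply_coe (b : Finset ℤ) (x : ℤ) (t : Bool) :
    lampfB b ((x : OnePoint ℤ), t) = ((x : OnePoint ℤ), xor (decide (x ∈ b)) t) := by
  rw [lampfB, lampProd_apply_coe _ (b.sort_nodup (· ≤ ·))]
  simp [Finset.mem_sort]

lemma lampfB_apply_infty (b : Finset ℤ) (t : Bool) :
    lampfB b ((∞ : OnePoint ℤ), t) = (∞, t) :=
  lampProd_apply_infty _ t

/-- The parametrization of elements of `F_n`. -/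
def lampU (p : ℤ × Finset ℤ) : Equiv.Perm LampX := lampSigma ^ p.1 * lampfB p.2

lemma lampU_apply_coe (a : ℤ) (b : Finset ℤ) (x : ℤ) (t : Bool) :
    lampU (a, b) ((x : OnePoint ℤ), t) = (((x - a : ℤ) : OnePoint ℤ), xor (decide (x ∈ b)) t) := by
  have h : lampU (a, b) ((x : OnePoint ℤ), t)
      = (lampSigma ^ a) (lampfB b ((x : OnePoint ℤ), t)) := rfl
  rw [h, lampfB_apply_coe, lampSigma_zpow_coe]

lemma lampU_apply_infty (a : ℤ) (b : Finset ℤ) (t : Bool) :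
    lampU (a, b) ((∞ : OnePoint ℤ), t) = (∞, t) := by
  have h : lampU (a, b) ((∞ : OnePoint ℤ), t)
      = (lampSigma ^ a) (lampfB b ((∞ : OnePoint ℤ), t)) := rfl
  rw [h, lampfB_apply_infty, lampSigma_zpow_infty]

lemma lampU_injective : Function.Injective lampU := by
  rintro ⟨a, b⟩ ⟨a', b'⟩ h
  have ha : a = a' := by
    have h0 := congrArg (fun e : Equiv.Perm LampX => (e (((0 : ℤ) : OnePoint ℤ), false)).1) h
    simp only [lampU_apply_coe] at h0
    have := OnePoint.coe_injective h0
    omega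
  subst ha
  have hb : b = b' := by
    ext x
    have h0 := congrArg (fun e : Equiv.Perm LampX => (e (((x : ℤ) : OnePoint ℤ), false)).2) h
    simp only [lampU_apply_coe] at h0
    simpa using h0
  subst hb
  rfl

lemma lampF_mul_self : lampF * lampF = 1 := by
  letI : DecidableEq LampX := Classical.decEq _
  exact Equiv.swap_mul_self _ _

lemma lampSigma_mul_lampU (a : ℤ) (b : Finset ℤ) :
    lampSigma * lampU (a, b) = lampU (a + 1, b) := by
  show lampSigma * (lampSigma ^ a * lampfB b) = lampSigma ^ (a + 1) * lampfB b
  rw [← mul_assoc, ← zpow_one_add, add_comm]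

open scoped symmDiff in
lemma lampF_mul_lampU (a : ℤ) (b : Finset ℤ) :
    lampF * lampU (a, b) = lampU (a, b ∆ {a}) := by
  classical
  apply Equiv.ext
  rintro ⟨x, t⟩
  cases x with
  | infty =>
    have h : (lampF * lampU (a, b)) ((∞ : OnePoint ℤ), t) = lampF (lampU (a, b) (∞, t)) :=
      Equiv.Perm.mul_apply _ _ _
    show (lampF * lampU (a, b)) ((∞ : OnePoint ℤ), t) = lampU (a, b ∆ {a}) (∞, t)
    rw [h, lampU_apply_infty, lampF_apply_infty, lampU_apply_infty]
  | coe x =>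
    have h : (lampF * lampU (a, b)) (((x : ℤ) : OnePoint ℤ), t) = lampF (lampU (a, b) (x, t)) :=
      Equiv.Perm.mul_apply _ _ _
    show (lampF * lampU (a, b)) (((x : ℤ) : OnePoint ℤ), t) = lampU (a, b ∆ {a}) (x, t)
    rw [h, lampU_apply_coe, lampF_apply_coe, lampU_apply_coe]
    refine Prod.ext rfl ?_
    simp only [sub_eq_zero, Finset.mem_symmDiff, Finset.mem_singleton]
    by_cases hxa : x = a
    · subst hxa
      by_cases hxb : x ∈ b <;> simp [hxb]
    · by_cases hxb : x ∈ b <;> simp [hxa, hxb]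
open scoped symmDiff

section FolnerGeneral

variable {α : Type*} [DecidableEq α]

lemma symmDiff_subset_union_sdiff {X Y H : Finset α} (hX : X ⊆ H) (hY : Y ⊆ H) :
    X ∆ Y ⊆ (H \ Y) ∪ (H \ X) := by
  intro x hx
  rw [Finset.mem_symmDiff] at hx
  rw [Finset.mem_union, Finset.mem_sdiff, Finset.mem_sdiff]
  rcases hx with ⟨h1, h2⟩ | ⟨h1, h2⟩
  · exact Or.inl ⟨hX h1, h2⟩
  · exact Or.inr ⟨hY h1, h2⟩

variable {G : Type*} [Group G] [DecidableEq G]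

lemma image_mul_inv_symmDiff_card (g : G) (F : Finset G) :
    ((F.image (g⁻¹ * ·)) ∆ F).card = ((F.image (g * ·)) ∆ F).card := by
  have himg : ((F.image (g * ·)).image (g⁻¹ * ·)) = F := by
    rw [Finset.image_image]
    have h : ((g⁻¹ * ·) ∘ (g * ·)) = id := by
      funext x; simp [Function.comp]
    rw [h, Finset.image_id]
  have h : (F.image (g⁻¹ * ·)) ∆ F = (F ∆ (F.image (g * ·))).image (g⁻¹ * ·) := by
    rw [Finset.image_symmDiff _ _ (mul_right_injective g⁻¹), himg]
  rw [h, Finset.card_image_of_injective _ (mul_right_injective g⁻¹), symmDiff_comm]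

lemma image_mul_mul_symmDiff_card (g₁ g₂ : G) (F : Finset G) :
    ((F.image (g₁ * g₂ * ·)) ∆ F).card
      ≤ ((F.image (g₁ * ·)) ∆ F).card + ((F.image (g₂ * ·)) ∆ F).card := by
  have h1 : F.image (g₁ * g₂ * ·) = (F.image (g₂ * ·)).image (g₁ * ·) := by
    rw [Finset.image_image]
    refine Finset.image_congr fun p _ => ?_
    simp [Function.comp, mul_assoc]
  have h2 : ((F.image (g₂ * ·)).image (g₁ * ·)) ∆ (F.image (g₁ * ·))
      = ((F.image (g₂ * ·)) ∆ F).image (g₁ * ·) :=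
    (Finset.image_symmDiff _ _ (mul_right_injective g₁)).symm
  calc ((F.image (g₁ * g₂ * ·)) ∆ F).card
      ≤ (((F.image (g₁ * g₂ * ·)) ∆ (F.image (g₁ * ·))) ∪ ((F.image (g₁ * ·)) ∆ F)).card :=
        Finset.card_le_card (symmDiff_triangle _ _ _)
    _ ≤ ((F.image (g₁ * g₂ * ·)) ∆ (F.image (g₁ * ·))).card + ((F.image (g₁ * ·)) ∆ F).card :=
        Finset.card_union_le _ _
    _ = ((F.image (g₂ * ·)) ∆ F).card + ((F.image (g₁ * ·)) ∆ F).card := by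
        rw [h1, h2, Finset.card_image_of_injective _ (mul_right_injective g₁)]
    _ = ((F.image (g₁ * ·)) ∆ F).card + ((F.image (g₂ * ·)) ∆ F).card := by ring

end FolnerGeneral

lemma tendsto_lamp_aux : Tendsto (fun n : ℕ => ((8 * n + 2 : ℕ) : ℝ) / 2 ^ n) atTop (𝓝 0) := by
  have h1 : Tendsto (fun n : ℕ => (8 : ℝ) * (n * (1 / 2 : ℝ) ^ n) + 2 * (1 / 2 : ℝ) ^ n)
      atTop (𝓝 (8 * 0 + 2 * 0)) :=
    ((tendsto_self_mul_const_pow_of_lt_one (by norm_num) (by norm_num)).const_mul 8).add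
      ((tendsto_pow_atTop_nhds_zero_of_lt_one (by norm_num) (by norm_num)).const_mul 2)
  norm_num at h1
  refine h1.congr fun n => ?_
  push_cast
  rw [div_pow, one_pow]
  field_simp
def lampA (n : ℕ) : Finset ℤ := Finset.Icc (-(2 ^ n : ℤ)) (2 ^ n)

def lampW (n : ℕ) : Finset ℤ := Finset.Icc (-(2 * n : ℤ)) (2 * n)

lemma lampW_card_le (n : ℕ) : (lampW n).card ≤ 4 * n + 1 := by
  rw [lampW, Int.card_Icc]
  omega

lemma lampA_card_ge (n : ℕ) : (2 : ℕ) ^ n ≤ (lampA n).card := by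
  rw [lampA, Int.card_Icc]
  have h : ((2 : ℕ) ^ n : ℤ) = 2 ^ n := by push_cast; rfl
  omega

lemma lamp_sigma_bound (Bn : Finset (Finset ℤ)) (n : ℕ) :
    letI : DecidableEq (Equiv.Perm LampX) := Classical.decEq _
    (((((lampA n) ×ˢ Bn).image lampU).image (lampSigma * ·)) ∆ ((lampA n ×ˢ Bn).image lampU)).card
      ≤ 2 * Bn.card := by
  letI : DecidableEq (Equiv.Perm LampX) := Classical.decEq _
  set Fn := (lampA n ×ˢ Bn).image lampU with hFn
  set H := Finset.Icc (-(2 ^ n : ℤ)) ((2 ^ n : ℤ) + 1) with hH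
  set G := (H ×ˢ Bn).image lampU with hG
  have hAH : lampA n ⊆ H := by
    rw [lampA, hH]
    exact Finset.Icc_subset_Icc le_rfl (by omega)
  have hFG : Fn ⊆ G :=
    Finset.image_subset_image (Finset.product_subset_product hAH (Finset.Subset.refl _))
  have himg : Fn.image (lampSigma * ·)
      = ((lampA n ×ˢ Bn).image (fun p : ℤ × Finset ℤ => (p.1 + 1, p.2))).image lampU := by
    rw [hFn, Finset.image_image, Finset.image_image]
    exact Finset.image_congr fun p _ => lampSigma_mul_lampU p.1 p.2
  have hsub2 : ((lampA n ×ˢ Bn).image (fun p : ℤ × Finset ℤ => (p.1 + 1, p.2))) ⊆ H ×ˢ Bn := by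
    intro q hq
    simp only [Finset.mem_image] at hq
    obtain ⟨p, hp, rfl⟩ := hq
    rw [Finset.mem_product] at hp ⊢
    refine ⟨?_, hp.2⟩
    have h1 := hp.1
    rw [lampA, Finset.mem_Icc] at h1
    rw [hH, Finset.mem_Icc]
    omega
  have hsFG : Fn.image (lampSigma * ·) ⊆ G := by
    rw [himg, hG]; exact Finset.image_subset_image hsub2
  have hcards : Fn.card = (lampA n).card * Bn.card := by
    rw [hFn, Finset.card_image_of_injective _ lampU_injective, Finset.card_product]
  have hcardsS : (Fn.image (lampSigma * ·)).card = (lampA n).card * Bn.card := by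
    rw [Finset.card_image_of_injective _ (mul_right_injective lampSigma), hcards]
  have hcardG : G.card ≤ ((lampA n).card + 1) * Bn.card := by
    have h1 : G.card ≤ H.card * Bn.card := by
      rw [hG, Finset.card_image_of_injective _ lampU_injective, Finset.card_product]
    have h2 : H.card = (lampA n).card + 1 := by
      rw [hH, lampA, Int.card_Icc, Int.card_Icc]
      have h3 : (0 : ℤ) ≤ 2 ^ n := by positivity
      omega
    rw [h2] at h1
    exact h1
  have htri := Finset.card_le_card
    (symmDiff_subset_union_sdiff (H := G) hsFG hFG)
  have hun := Finset.card_union_le (G \ Fn) (G \ (Fn.image (lampSigma * ·)))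
  have hc1 : (G \ Fn).card = G.card - Fn.card := Finset.card_sdiff_of_subset hFG
  have hc2 : (G \ Fn.image (lampSigma * ·)).card = G.card - (Fn.image (lampSigma * ·)).card :=
    Finset.card_sdiff_of_subset hsFG
  have hle : Fn.card ≤ G.card := Finset.card_le_card hFG
  have hexp : ((lampA n).card + 1) * Bn.card = (lampA n).card * Bn.card + Bn.card := by ring
  rw [hexp] at hcardG
  obtain ⟨P, hP⟩ : ∃ P, (lampA n).card * Bn.card = P := ⟨_, rfl⟩
  rw [hP] at hcards hcardsS hcardG
  omega

open scoped symmDiff in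
lemma lamp_f_bound (Bn : Finset (Finset ℤ)) (n : ℕ)
    (hBsub : ∀ b ∈ Bn, b ⊆ lampA n)
    (hBwin : ∀ b ∈ Bn, ∀ b' : Finset ℤ, b' ⊆ lampA n →
      b ∩ lampW n = b' ∩ lampW n → b' ∈ Bn) :
    letI : DecidableEq (Equiv.Perm LampX) := Classical.decEq _
    ((((lampA n ×ˢ Bn).image lampU).image (lampF * ·)) ∆ ((lampA n ×ˢ Bn).image lampU)).card
      ≤ (8 * n + 2) * Bn.card := by
  letI : DecidableEq (Equiv.Perm LampX) := Classical.decEq _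
  set Fn := (lampA n ×ˢ Bn).image lampU with hFn
  set sw : ℤ × Finset ℤ → ℤ × Finset ℤ := fun p => (p.1, p.2 ∆ {p.1}) with hsw
  have hswinv : ∀ p, sw (sw p) = p := by
    intro p
    simp only [hsw]
    rw [symmDiff_symmDiff_cancel_right]
  have hswi : Function.Injective sw := Function.LeftInverse.injective hswinv
  have himg : Fn.image (lampF * ·) = ((lampA n ×ˢ Bn).image sw).image lampU := by
    rw [hFn, Finset.image_image, Finset.image_image]
    exact Finset.image_congr fun p _ => lampF_mul_lampU p.1 p.2
  have hout : (((lampA n \ lampW n) ×ˢ Bn).image sw).image lampU ⊆ Fn := by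
    intro y hy
    rw [Finset.image_image, Finset.mem_image] at hy
    obtain ⟨⟨a, b⟩, hp, rfl⟩ := hy
    rw [Finset.mem_product, Finset.mem_sdiff] at hp
    obtain ⟨⟨haA, haW⟩, hbB⟩ := hp
    have hsub : b ∆ {a} ⊆ lampA n := by
      intro x hx
      rw [Finset.mem_symmDiff] at hx
      rcases hx with ⟨h1, _⟩ | ⟨h1, _⟩
      · exact hBsub b hbB h1
      · rw [Finset.mem_singleton] at h1; subst h1; exact haA
    have htr : b ∩ lampW n = (b ∆ {a}) ∩ lampW n := by
      ext x
      rw [Finset.mem_inter, Finset.mem_inter, Finset.mem_symmDiff, Finset.mem_singleton]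
      constructor
      · rintro ⟨hxb, hxW⟩
        refine ⟨Or.inl ⟨hxb, ?_⟩, hxW⟩
        rintro rfl; exact haW hxW
      · rintro ⟨h1, hxW⟩
        rcases h1 with ⟨hxb, _⟩ | ⟨hxa, _⟩
        · exact ⟨hxb, hxW⟩
        · exact absurd (hxa ▸ hxW) haW
    have hmem : b ∆ {a} ∈ Bn := hBwin b hbB _ hsub htr
    rw [hFn, Finset.mem_image]
    exact ⟨(a, b ∆ {a}), Finset.mem_product.mpr ⟨haA, hmem⟩, rfl⟩
  have hmain : Fn.image (lampF * ·) \ Fn ⊆ ((lampA n ∩ lampW n) ×ˢ Bn).image (lampU ∘ sw) := by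
    intro y hy
    rw [Finset.mem_sdiff] at hy
    obtain ⟨hy1, hy2⟩ := hy
    rw [himg, Finset.image_image, Finset.mem_image] at hy1
    obtain ⟨⟨a, b⟩, hp, rfl⟩ := hy1
    rw [Finset.mem_product] at hp
    rw [Finset.mem_image]
    refine ⟨(a, b), ?_, rfl⟩
    rw [Finset.mem_product, Finset.mem_inter]
    refine ⟨⟨hp.1, ?_⟩, hp.2⟩
    by_contra haW
    apply hy2
    apply hout
    rw [Finset.image_image, Finset.mem_image]
    exact ⟨(a, b), by rw [Finset.mem_product, Finset.mem_sdiff]; exact ⟨⟨hp.1, haW⟩, hp.2⟩, rfl⟩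
  have hcard1 : (Fn.image (lampF * ·) \ Fn).card ≤ (4 * n + 1) * Bn.card := by
    calc (Fn.image (lampF * ·) \ Fn).card
        ≤ (((lampA n ∩ lampW n) ×ˢ Bn).image (lampU ∘ sw)).card := Finset.card_le_card hmain
      _ ≤ ((lampA n ∩ lampW n) ×ˢ Bn).card := Finset.card_image_le
      _ = (lampA n ∩ lampW n).card * Bn.card := Finset.card_product _ _
      _ ≤ (4 * n + 1) * Bn.card := by
          apply Nat.mul_le_mul_right
          calc (lampA n ∩ lampW n).card
              ≤ (lampW n).card := Finset.card_le_card Finset.inter_subset_right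
            _ ≤ 4 * n + 1 := lampW_card_le n
  have hrev : (Fn \ Fn.image (lampF * ·)).card = (Fn.image (lampF * ·) \ Fn).card := by
    have hinv : (Fn.image (lampF * ·)).image (lampF * ·) = Fn := by
      rw [Finset.image_image]
      have h : ((lampF * ·) ∘ (lampF * ·)) = id := by
        funext x
        simp only [Function.comp, ← mul_assoc, lampF_mul_self, one_mul, id]
      rw [h, Finset.image_id]
    calc (Fn \ Fn.image (lampF * ·)).card
        = ((Fn \ Fn.image (lampF * ·)).image (lampF * ·)).card :=
          (Finset.card_image_of_injective _ (mul_right_injective lampF)).symm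
      _ = (Fn.image (lampF * ·) \ Fn).card := by
          rw [Finset.image_sdiff _ _ (mul_right_injective lampF), hinv]
  rw [symmDiff_def, Finset.sup_eq_union]
  calc ((Fn.image (lampF * ·) \ Fn) ∪ (Fn \ Fn.image (lampF * ·))).card
      ≤ (Fn.image (lampF * ·) \ Fn).card + (Fn \ Fn.image (lampF * ·)).card :=
        Finset.card_union_le _ _
    _ ≤ (8 * n + 2) * Bn.card := by
        rw [hrev]
        have h : (4 * n + 1) * Bn.card + (4 * n + 1) * Bn.card = (8 * n + 2) * Bn.card := by ring
        omega

end LampAux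
open OnePoint
set_option maxHeartbeats 2000000

/-- For any sequence `r` in `[0,1]` (entering through the associated family `B_n` of
admissible configurations: finite subsets of `[-2^n, 2^n]` whose trace on the window
`[-2n, 2n]` is one of the prescribed patterns, with entries outside the window
arbitrary), the sets `F_n = {σ^a ∘ f_𝐛 : a ∈ [-2^n, 2^n], 𝐛 ∈ B_n}` form a left Følner
sequence in the Lamplighter group `G = ⟨f, σ⟩`, i.e. `|g F_n Δ F_n|/|F_n| → 0` for
every `g ∈ G`. -/
theorem lamplighter_Fn_left_Folner :
    haveI : DecidableEq (Equiv.Perm LampX) := Classical.decEq _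
    ∀ B : ℕ → Finset (Finset ℤ),
    (∀ n, (B n).Nonempty) →
    (∀ n, ∀ b ∈ B n, b ⊆ Finset.Icc (-(2 ^ n : ℤ)) (2 ^ n)) →
    -- entries outside the window `[-2n, 2n]` are arbitrary: membership in `B n` only
    -- depends on the trace on the window
    (∀ n, ∀ b ∈ B n, ∀ b' : Finset ℤ, b' ⊆ Finset.Icc (-(2 ^ n : ℤ)) (2 ^ n) →
      b ∩ Finset.Icc (-(2 * n : ℤ)) (2 * n) = b' ∩ Finset.Icc (-(2 * n : ℤ)) (2 * n) →
      b' ∈ B n) →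
    ∀ F : ℕ → Finset (Equiv.Perm LampX),
    (∀ n, F n = (Finset.Icc (-(2 ^ n : ℤ)) (2 ^ n) ×ˢ B n).image
        (fun p => lampSigma ^ p.1 * lampfB p.2)) →
    ∀ g ∈ lampG, Tendsto
      (fun n => ((((F n).image (g * ·)) ∆ (F n)).card : ℝ) / (F n).card)
      atTop (𝓝 0) := by
  intro B hBne hBsub hBwin F hF g hg
  letI instD : DecidableEq (Equiv.Perm LampX) := Classical.decEq _
  have hF' : ∀ n, F n = (lampA n ×ˢ B n).image lampU := by
    intro n; rw [hF n]; rfl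
  have hcardF : ∀ n, (F n).card = (lampA n).card * (B n).card := by
    intro n
    rw [hF' n, Finset.card_image_of_injective _ lampU_injective, Finset.card_product]
  -- the generators satisfy the Følner property
  have hgen : ∀ g₀ ∈ ({lampF, lampSigma} : Set (Equiv.Perm LampX)),
      Tendsto (fun n => ((((F n).image (g₀ * ·)) ∆ (F n)).card : ℝ) / (F n).card)
        atTop (𝓝 0) := by
    intro g₀ hg₀
    have hbound : ∀ n, (((F n).image (g₀ * ·)) ∆ (F n)).card ≤ (8 * n + 2) * (B n).card := by
      intro n
      rcases hg₀ with rfl | rfl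
      · rw [hF' n]
        exact lamp_f_bound (B n) n (fun b hb => hBsub n b hb)
          (fun b hb b' hb' htr => hBwin n b hb b' hb' htr)
      · rw [hF' n]
        refine le_trans (lamp_sigma_bound (B n) n) ?_
        exact Nat.mul_le_mul_right _ (by omega)
    refine squeeze_zero (fun n => by positivity) ?_ tendsto_lamp_aux
    intro n
    have hBpos : (0 : ℝ) < (B n).card := by
      exact_mod_cast Finset.card_pos.mpr (hBne n)
    have h1 : ((((F n).image (g₀ * ·)) ∆ (F n)).card : ℝ)
        ≤ ((8 * n + 2 : ℕ) : ℝ) * (B n).card := by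
      have := hbound n
      push_cast
      exact_mod_cast this
    have h2 : (2 : ℝ) ^ n * (B n).card ≤ ((F n).card : ℝ) := by
      rw [hcardF n]
      push_cast
      have h3 : ((2 : ℕ) ^ n : ℝ) ≤ ((lampA n).card : ℝ) := by
        exact_mod_cast lampA_card_ge n
      push_cast at h3
      exact mul_le_mul_of_nonneg_right h3 (le_of_lt hBpos)
    calc ((((F n).image (g₀ * ·)) ∆ (F n)).card : ℝ) / (F n).card
        ≤ (((8 * n + 2 : ℕ) : ℝ) * (B n).card) / ((2 : ℝ) ^ n * (B n).card) :=
          div_le_div₀ (by positivity) h1 (by positivity) h2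
      _ = ((8 * n + 2 : ℕ) : ℝ) / 2 ^ n := mul_div_mul_right _ _ (ne_of_gt hBpos)
  -- closure induction
  have hg' : g ∈ Subgroup.closure ({lampF, lampSigma} : Set (Equiv.Perm LampX)) := hg
  clear hg
  induction hg' using Subgroup.closure_induction with
  | mem x hx => exact hgen x hx
  | one =>
    refine tendsto_const_nhds.congr fun n => ?_
    have h : (F n).image ((1 : Equiv.Perm LampX) * ·) = F n := by
      simp only [one_mul]
      exact Finset.image_id
    rw [h, symmDiff_self]
    simp
  | mul x y hx hy ihx ihy =>
    have hsum : Tendsto (fun n => ((((F n).image (x * ·)) ∆ (F n)).card : ℝ) / (F n).card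
        + ((((F n).image (y * ·)) ∆ (F n)).card : ℝ) / (F n).card) atTop (𝓝 0) := by
      have h := ihx.add ihy
      rwa [add_zero] at h
    refine squeeze_zero (fun n => by positivity) (fun n => ?_) hsum
    have hcard := image_mul_mul_symmDiff_card x y (F n)
    calc ((((F n).image (x * y * ·)) ∆ (F n)).card : ℝ) / (F n).card
        ≤ ((((F n).image (x * ·)) ∆ (F n)).card
            + (((F n).image (y * ·)) ∆ (F n)).card : ℝ) / (F n).card := by
          gcongr
          exact_mod_cast hcard
      _ = ((((F n).image (x * ·)) ∆ (F n)).card : ℝ) / (F n).card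
            + ((((F n).image (y * ·)) ∆ (F n)).card : ℝ) / (F n).card := by
          rw [add_div]
  | inv x hx ihx =>
    refine ihx.congr fun n => ?_
    rw [image_mul_inv_symmDiff_card]


end
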